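/- Let p ≥ 2, let Σ ∈ ℝ^{p×p} be symmetric positive semidefinite, let S ⊆ {1,…,p} with p ∈ S and s = |S| ≥ 2, and suppose Λ_min(Σ_SS) ≥ C_min > 0 where Σ_SS is the S×S submatrix of Σ. Let D^p denote the p×(p−1) matrix (I_{p−1}, −1_{p−1})ᵀ and set Σ^p = (D^p)ᵀ Σ D^p. Let Σ̂, Σ̃ be random p×p matrices on a probability space such that almost surely Σ̃ is symmetric positive semidefinite with ‖Σ̃ − Σ̂‖_max ≤ ‖K − Σ̂‖_max for every positive semidefinite K, and suppose there exist constants C, c, ζ, ε₀ > 0 such that for every 0 < ε' ≤ ε₀ and all i,j, P(|Σ̂_{ij} − Σ_{ij}| ≥ ε') ≤ C exp(−c n ε'² ζ⁻¹). Then for every ε ≤ min(ε₀, C_min/16), the (S−p)×(S−p) submatrix Σ̃^p_SS of Σ̃^p = (D^p)ᵀ Σ̃ D^p is positive definite with probability at least 1 − C p² exp(−c n (s−1)⁻² ε² ζ⁻¹ / 64). -/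

import Mathlib

open Matrix MeasureTheory
open scoped BigOperators ENNReal

/-- The `p × (p−1)` matrix `D^p = (I_{p−1}, −1_{p−1})ᵀ`. -/
def Dmat (p : ℕ) : Matrix (Fin p) (Fin (p - 1)) ℝ := fun i j =>
  if (i : ℕ) = (j : ℕ) then 1 else if (i : ℕ) = p - 1 then -1 else 0

/-- The entrywise maximum (absolute value) norm of a matrix. -/
noncomputable def maxNorm {m n : Type*} [Fintype m] [Fintype n]
    (M : Matrix m n ℝ) : ℝ :=
  ⨆ i, ⨆ j, |M i j|

/-- The smallest eigenvalue of a real symmetric matrix, expressed as the infimum of the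
Rayleigh quotient `vᵀ M v / ‖v‖₂²` over nonzero vectors `v`. -/
noncomputable def lamMin {m : Type*} [Fintype m] (M : Matrix m m ℝ) : ℝ :=
  ⨅ v : {v : m → ℝ // v ≠ 0}, (v.1 ⬝ᵥ M.mulVec v.1) / ∑ i, (v.1 i) ^ 2

-- helper lemmas
lemma sum_subtype_of_support {m : Type*} [Fintype m] (P : m → Prop) [DecidablePred P]
    [inst : Fintype {i // P i}]
    (f : m → ℝ) (hf : ∀ i, ¬ P i → f i = 0) :
    ∑ i, f i = ∑ i : {i // P i}, f i.1 := by
  obtain rfl : inst = Subtype.fintype P := Subsingleton.elim _ _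
  rw [← Fintype.sum_subtype_add_sum_subtype P f]
  have h0 : ∑ i : {x // ¬ P x}, f i.1 = 0 :=
    Finset.sum_eq_zero fun i _ => hf i.1 i.2
  rw [h0, add_zero]

lemma quad_support {m : Type*} [Fintype m] (P : m → Prop) [DecidablePred P]
    [inst : Fintype {i // P i}]
    (N : Matrix m m ℝ) (z : m → ℝ) (hz : ∀ i, ¬ P i → z i = 0) :
    z ⬝ᵥ N *ᵥ z =
      (fun t : {i // P i} => z t.1) ⬝ᵥ
        (N.submatrix (fun t : {i // P i} => t.1) (fun t : {i // P i} => t.1)) *ᵥ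
        (fun t : {i // P i} => z t.1) := by
  simp only [dotProduct, mulVec, Matrix.submatrix_apply]
  rw [sum_subtype_of_support P (fun i => z i * ∑ j, N i j * z j)
      (fun i hi => by simp [hz i hi])]
  refine Finset.sum_congr rfl fun t _ => ?_
  congr 1
  exact sum_subtype_of_support P (fun j => N t.1 j * z j)
      (fun j hj => by simp [hz j hj])

lemma entry_le_maxNorm {m n : Type*} [Fintype m] [Fintype n]
    (M : Matrix m n ℝ) (i : m) (j : n) : |M i j| ≤ maxNorm M := by
  have h1 : |M i j| ≤ ⨆ j', |M i j'| :=
    le_ciSup (f := fun j' => |M i j'|) (Set.Finite.bddAbove (Set.finite_range _)) j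
  exact h1.trans (le_ciSup (f := fun i' => ⨆ j', |M i' j'|)
    (Set.Finite.bddAbove (Set.finite_range _)) i)

lemma maxNorm_le {m n : Type*} [Fintype m] [Fintype n] [Nonempty m] [Nonempty n]
    (M : Matrix m n ℝ) (a : ℝ) (h : ∀ i j, |M i j| ≤ a) : maxNorm M ≤ a :=
  ciSup_le fun i => ciSup_le fun j => h i j

lemma Dmat_mulVec_castLE {p : ℕ} (u : Fin (p-1) → ℝ) (j : Fin (p-1)) :
    (Dmat p *ᵥ u) (Fin.castLE (Nat.sub_le p 1) j) = u j := by
  simp only [mulVec, dotProduct, Dmat, Fin.coe_castLE]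
  have key : ∀ k : Fin (p-1),
      (if (j:ℕ) = (k:ℕ) then (1:ℝ) else if (j:ℕ) = p-1 then -1 else 0) * u k
        = if j = k then u k else 0 := by
    intro k
    rcases eq_or_ne j k with h | h
    · simp [h]
    · have h1 : (j:ℕ) ≠ (k:ℕ) := fun hh => h (Fin.ext hh)
      have h2 : (j:ℕ) ≠ p - 1 := Nat.ne_of_lt j.isLt
      simp [h1, h2, h]
  rw [Finset.sum_congr rfl fun k _ => key k, Finset.sum_ite_eq]
  simp

lemma Dmat_entry_last {p : ℕ} (i : Fin p) (hi : (i:ℕ) = p - 1) (u : Fin (p-1) → ℝ) :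
    (Dmat p *ᵥ u) i = -∑ j, u j := by
  simp only [mulVec, dotProduct, Dmat, hi]
  trans (∑ k : Fin (p-1), -u k)
  · refine Finset.sum_congr rfl fun k _ => ?_
    have h1 : p - 1 ≠ (k:ℕ) := Ne.symm (Nat.ne_of_lt k.isLt)
    simp [h1]
  · simp

lemma pm1_lt {p : ℕ} (hp : 2 ≤ p) : p - 1 < p := by omega

lemma sum_fin_split {p : ℕ} (hp : 2 ≤ p) (f : Fin p → ℝ) :
    ∑ i, f i = f ⟨p-1, pm1_lt hp⟩ + ∑ j : Fin (p-1), f (Fin.castLE (Nat.sub_le p 1) j) := by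
  have huniv : (Finset.univ : Finset (Fin p)) =
      insert ⟨p-1, by omega⟩ (Finset.univ.map (Fin.castLEEmb (Nat.sub_le p 1))) := by
    ext i
    constructor
    · intro _
      rcases eq_or_ne (i:ℕ) (p-1) with h | h
      · exact Finset.mem_insert.mpr (Or.inl (Fin.ext h))
      · refine Finset.mem_insert.mpr (Or.inr (Finset.mem_map.mpr
          ⟨⟨(i:ℕ), by have := i.isLt; omega⟩, Finset.mem_univ _, Fin.ext rfl⟩))
    · intro _; exact Finset.mem_univ i
  rw [huniv, Finset.sum_insert, Finset.sum_map]
  · rfl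
  · intro hmem
    rcases Finset.mem_map.mp hmem with ⟨j, _, hj⟩
    have h1 := congrArg Fin.val hj
    simp only [Fin.castLEEmb, Function.Embedding.coeFn_mk, Fin.coe_castLE] at h1
    have := j.isLt; omega

lemma cardT_le {p : ℕ} (hp : 2 ≤ p) (S : Finset (Fin p)) (hpS : (⟨p-1, pm1_lt hp⟩ : Fin p) ∈ S) :
    Fintype.card {j : Fin (p-1) // Fin.castLE (Nat.sub_le p 1) j ∈ S} ≤ S.card - 1 := by
  classical
  rw [Fintype.card_subtype]
  have h : (Finset.univ.filter fun j : Fin (p-1) => Fin.castLE (Nat.sub_le p 1) j ∈ S).card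
      ≤ (S.erase ⟨p-1, by omega⟩).card := by
    apply Finset.card_le_card_of_injOn (fun j => Fin.castLE (Nat.sub_le p 1) j)
    · intro j hj
      simp only [Finset.coe_filter, Finset.mem_coe, Finset.mem_filter, Finset.mem_univ, true_and, Set.mem_setOf_eq] at hj
      refine Finset.mem_erase.mpr ⟨?_, hj⟩
      intro hh
      have := congrArg Fin.val hh
      simp only [Fin.coe_castLE] at this
      have := j.isLt; omega
    · intro a _ b _ hab
      exact Fin.castLE_injective _ hab
  simpa [Finset.card_erase_of_mem hpS] using h

lemma quad_abs_bound {m : Type*} [Fintype m] (Δ : Matrix m m ℝ) (w : m → ℝ) (δ : ℝ)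
    (hδ : ∀ i j, |Δ i j| ≤ δ) (hδ0 : 0 ≤ δ) :
    |w ⬝ᵥ Δ *ᵥ w| ≤ δ * (∑ i, |w i|)^2 := by
  simp only [dotProduct, mulVec]
  calc |∑ i, w i * ∑ j, Δ i j * w j| ≤ ∑ i, |w i * ∑ j, Δ i j * w j| :=
        Finset.abs_sum_le_sum_abs _ _
    _ ≤ ∑ i, |w i| * (δ * ∑ j, |w j|) := by
        refine Finset.sum_le_sum fun i _ => ?_
        rw [abs_mul]
        refine mul_le_mul_of_nonneg_left ?_ (abs_nonneg _)
        calc |∑ j, Δ i j * w j| ≤ ∑ j, |Δ i j * w j| := Finset.abs_sum_le_sum_abs _ _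
          _ ≤ ∑ j, δ * |w j| := by
              refine Finset.sum_le_sum fun j _ => ?_
              rw [abs_mul]
              exact mul_le_mul_of_nonneg_right (hδ i j) (abs_nonneg _)
          _ = δ * ∑ j, |w j| := by rw [Finset.mul_sum]
    _ = δ * (∑ i, |w i|)^2 := by rw [← Finset.sum_mul]; ring

theorem det_core (p : ℕ) (hp : 2 ≤ p)
    (Sig Sigt : Matrix (Fin p) (Fin p) ℝ) (hSig : Sig.PosSemidef) (hSigt : Sigt.IsHermitian)
    (S : Finset (Fin p)) (hpS : (⟨p - 1, pm1_lt hp⟩ : Fin p) ∈ S)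
    (Cmin : ℝ) (hCmin : 0 < Cmin)
    (hmin : Cmin ≤ lamMin (Sig.submatrix (fun i : S => (i : Fin p)) (fun j : S => (j : Fin p))))
    (δ : ℝ) (hδ0 : 0 ≤ δ)
    (hδ : ∀ i j, |Sigt i j - Sig i j| ≤ δ)
    (hsmall : 8 * ((S.card : ℝ) - 1) * δ < Cmin) :
    (((Dmat p)ᵀ * Sigt * Dmat p).submatrix
      (fun j : {j : Fin (p - 1) // Fin.castLE (Nat.sub_le p 1) j ∈ S} => j.1)
      (fun j : {j : Fin (p - 1) // Fin.castLE (Nat.sub_le p 1) j ∈ S} => j.1)).PosDef := by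
  classical
  rw [Matrix.posDef_iff_dotProduct_mulVec]
  constructor
  · -- Hermitian
    have h1 : ((Dmat p)ᵀ * Sigt * Dmat p).IsHermitian := by
      have := Matrix.isHermitian_conjTranspose_mul_mul (Dmat p) hSigt
      rwa [Matrix.conjTranspose_eq_transpose_of_trivial] at this
    exact h1.submatrix _
  · intro x hx
    have hstar : star x = x := by simp
    rw [hstar]
    set u : Fin (p-1) → ℝ :=
      fun j => if h : Fin.castLE (Nat.sub_le p 1) j ∈ S then x ⟨j, h⟩ else 0 with hu
    set w : Fin p → ℝ := Dmat p *ᵥ u with hw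
    have hwe : ∀ j : Fin (p-1), w (Fin.castLE (Nat.sub_le p 1) j) = u j :=
      fun j => Dmat_mulVec_castLE u j
    have hwL : w ⟨p-1, by omega⟩ = -∑ j, u j := Dmat_entry_last _ rfl u
    have hwz : ∀ i : Fin p, i ∉ S → w i = 0 := by
      intro i hi
      have hne : (i:ℕ) ≠ p - 1 := by
        intro hh
        exact hi ((Fin.ext hh : i = ⟨p-1, by omega⟩) ▸ hpS)
      have hilt : (i:ℕ) < p - 1 := by have := i.isLt; omega
      have hie : i = Fin.castLE (Nat.sub_le p 1) ⟨(i:ℕ), hilt⟩ := Fin.ext rfl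
      rw [hie, hwe]
      have hni : ¬ Fin.castLE (Nat.sub_le p 1) (⟨(i:ℕ), hilt⟩ : Fin (p-1)) ∈ S := by
        rwa [← hie]
      simp only [hu]
      rw [dif_neg hni]
    -- Step A
    have hA : x ⬝ᵥ (((Dmat p)ᵀ * Sigt * Dmat p).submatrix
        (fun j : {j : Fin (p - 1) // Fin.castLE (Nat.sub_le p 1) j ∈ S} => j.1)
        (fun j : {j : Fin (p - 1) // Fin.castLE (Nat.sub_le p 1) j ∈ S} => j.1)) *ᵥ x
        = u ⬝ᵥ ((Dmat p)ᵀ * Sigt * Dmat p) *ᵥ u := by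
      have hq := quad_support (fun j : Fin (p-1) => Fin.castLE (Nat.sub_le p 1) j ∈ S)
        ((Dmat p)ᵀ * Sigt * Dmat p) u (fun j hj => by simp [hu, hj])
      have hux : (fun t : {j : Fin (p-1) // Fin.castLE (Nat.sub_le p 1) j ∈ S} => u t.1) = x := by
        funext t
        simp [hu, t.2]
      rw [hq, hux]
    -- Step B
    have hB : u ⬝ᵥ ((Dmat p)ᵀ * Sigt * Dmat p) *ᵥ u = w ⬝ᵥ Sigt *ᵥ w := by
      rw [← Matrix.mulVec_mulVec, ← Matrix.mulVec_mulVec, Matrix.dotProduct_mulVec,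
        Matrix.vecMul_transpose, hw]
    -- Step C
    have hC : w ⬝ᵥ Sigt *ᵥ w = w ⬝ᵥ Sig *ᵥ w + w ⬝ᵥ (Sigt - Sig) *ᵥ w := by
      rw [Matrix.sub_mulVec, dotProduct_sub]; ring
    -- Step D
    set v : ↥S → ℝ := fun t => w t.1 with hv
    have hD : w ⬝ᵥ Sig *ᵥ w = v ⬝ᵥ (Sig.submatrix
        (fun i : S => (i : Fin p)) (fun j : S => (j : Fin p))) *ᵥ v :=
      quad_support (fun i => i ∈ S) Sig w hwz
    have hxv : ∀ t : {j : Fin (p-1) // Fin.castLE (Nat.sub_le p 1) j ∈ S},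
        x t = v ⟨Fin.castLE (Nat.sub_le p 1) t.1, t.2⟩ := by
      intro t
      have h1 : v ⟨Fin.castLE (Nat.sub_le p 1) t.1, t.2⟩ = w (Fin.castLE (Nat.sub_le p 1) t.1) := rfl
      rw [h1, hwe]
      simp [hu, t.2]
    have hsum_u : ∑ j, (u j)^2 = ∑ t : {j : Fin (p-1) // Fin.castLE (Nat.sub_le p 1) j ∈ S}, (x t)^2 := by
      rw [sum_subtype_of_support (fun j : Fin (p-1) => Fin.castLE (Nat.sub_le p 1) j ∈ S)
        (fun j => (u j)^2) (fun j hj => by simp [hu, hj])]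
      refine Finset.sum_congr rfl fun t _ => ?_
      simp [hu, t.2]
    have hsum_w : ∑ i, (w i)^2 = ∑ t : ↥S, (v t)^2 :=
      sum_subtype_of_support (fun i => i ∈ S) (fun i => (w i)^2) (fun i hi => by simp [hwz i hi])
    have hsum_uw : ∑ j, (u j)^2 ≤ ∑ i, (w i)^2 := by
      rw [sum_fin_split hp (fun i => (w i)^2)]
      have h1 : ∑ j : Fin (p-1), (w (Fin.castLE (Nat.sub_le p 1) j))^2 = ∑ j, (u j)^2 :=
        Finset.sum_congr rfl fun j _ => by rw [hwe]
      rw [h1]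
      nlinarith [sq_nonneg (w ⟨p-1, by omega⟩)]
    have hxne : ∃ t, x t ≠ 0 := by
      by_contra hcon
      push_neg at hcon
      exact hx (funext fun t => by simpa using hcon t)
    have hx2 : 0 < ∑ t : {j : Fin (p-1) // Fin.castLE (Nat.sub_le p 1) j ∈ S}, (x t)^2 := by
      obtain ⟨t0, ht0⟩ := hxne
      refine Finset.sum_pos' (fun t _ => sq_nonneg _) ⟨t0, Finset.mem_univ _, by positivity⟩
    have hvne : v ≠ 0 := by
      obtain ⟨t0, ht0⟩ := hxne
      intro hv0
      apply ht0
      rw [hxv t0, hv0]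
      rfl
    have hbdd : BddBelow (Set.range (fun vv : {v0 : ↥S → ℝ // v0 ≠ 0} =>
        (vv.1 ⬝ᵥ (Sig.submatrix (fun i : S => (i : Fin p)) (fun j : S => (j : Fin p))) *ᵥ vv.1)
          / ∑ t : ↥S, (vv.1 t)^2)) := by
      refine ⟨0, ?_⟩
      rintro r ⟨vv, rfl⟩
      have hps : (Sig.submatrix (fun i : S => (i : Fin p)) (fun j : S => (j : Fin p))).PosSemidef :=
        hSig.submatrix _
      have h0 := (Matrix.posSemidef_iff_dotProduct_mulVec.mp hps).2 vv.1
      refine div_nonneg ?_ (Finset.sum_nonneg fun t _ => sq_nonneg _)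
      simpa using h0
    have hray : Cmin ≤ (v ⬝ᵥ (Sig.submatrix
        (fun i : S => (i : Fin p)) (fun j : S => (j : Fin p))) *ᵥ v) / ∑ t : ↥S, (v t)^2 :=
      hmin.trans (ciInf_le hbdd ⟨v, hvne⟩)
    have hxle : ∑ t : {j : Fin (p-1) // Fin.castLE (Nat.sub_le p 1) j ∈ S}, (x t)^2
        ≤ ∑ t : ↥S, (v t)^2 := by
      rw [hsum_w, hsum_u] at hsum_uw
      exact hsum_uw
    have hvsum_pos : 0 < ∑ t : ↥S, (v t)^2 := lt_of_lt_of_le hx2 hxle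
    have heig : Cmin * ∑ t : ↥S, (v t)^2 ≤ v ⬝ᵥ (Sig.submatrix
        (fun i : S => (i : Fin p)) (fun j : S => (j : Fin p))) *ᵥ v :=
      (le_div_iff₀ hvsum_pos).mp hray
    have herr : |w ⬝ᵥ (Sigt - Sig) *ᵥ w| ≤ δ * (∑ i, |w i|)^2 :=
      quad_abs_bound _ w δ (fun i j => by simpa [Matrix.sub_apply] using hδ i j) hδ0
    have habs_u : ∑ j, |u j| = ∑ t : {j : Fin (p-1) // Fin.castLE (Nat.sub_le p 1) j ∈ S}, |x t| := by
      rw [sum_subtype_of_support (fun j : Fin (p-1) => Fin.castLE (Nat.sub_le p 1) j ∈ S)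
        (fun j => |u j|) (fun j hj => by simp [hu, hj])]
      refine Finset.sum_congr rfl fun t _ => ?_
      simp [hu, t.2]
    have habs_w : ∑ i, |w i| ≤ 2 * ∑ j, |u j| := by
      rw [sum_fin_split hp (fun i => |w i|)]
      have h1 : ∑ j : Fin (p-1), |w (Fin.castLE (Nat.sub_le p 1) j)| = ∑ j, |u j| :=
        Finset.sum_congr rfl fun j _ => by rw [hwe]
      rw [h1, hwL]
      have h2 : |-∑ j, u j| ≤ ∑ j, |u j| := by
        rw [abs_neg]
        exact Finset.abs_sum_le_sum_abs _ _
      linarith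
    have hcardR : (Fintype.card {j : Fin (p-1) // Fin.castLE (Nat.sub_le p 1) j ∈ S} : ℝ)
        ≤ (S.card : ℝ) - 1 := by
      have h1 := cardT_le hp S hpS
      have h2 : 1 ≤ S.card := Finset.card_pos.mpr ⟨_, hpS⟩
      have h3 : ((Fintype.card {j : Fin (p-1) // Fin.castLE (Nat.sub_le p 1) j ∈ S}) : ℝ)
          ≤ ((S.card - 1 : ℕ) : ℝ) := Nat.cast_le.mpr h1
      rwa [Nat.cast_sub h2, Nat.cast_one] at h3
    have hCS : (∑ t : {j : Fin (p-1) // Fin.castLE (Nat.sub_le p 1) j ∈ S}, |x t|)^2 ≤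
        (Fintype.card {j : Fin (p-1) // Fin.castLE (Nat.sub_le p 1) j ∈ S} : ℝ)
          * ∑ t : {j : Fin (p-1) // Fin.castLE (Nat.sub_le p 1) j ∈ S}, |x t|^2 := by
      simpa [Finset.card_univ] using
        (sq_sum_le_card_mul_sum_sq
          (s := (Finset.univ : Finset {j : Fin (p-1) // Fin.castLE (Nat.sub_le p 1) j ∈ S}))
          (f := fun t => |x t|))
    have hsq_abs : ∑ t : {j : Fin (p-1) // Fin.castLE (Nat.sub_le p 1) j ∈ S}, |x t|^2
        = ∑ t : {j : Fin (p-1) // Fin.castLE (Nat.sub_le p 1) j ∈ S}, (x t)^2 :=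
      Finset.sum_congr rfl fun t _ => sq_abs _
    -- assemble
    rw [hA, hB, hC, hD]
    have hW1nn : 0 ≤ ∑ i, |w i| := Finset.sum_nonneg fun i _ => abs_nonneg _
    have hT1nn : 0 ≤ ∑ j, |u j| := Finset.sum_nonneg fun j _ => abs_nonneg _
    have hWsq : (∑ i, |w i|)^2 ≤ 4 * (∑ j, |u j|)^2 := by
      have h1 := pow_le_pow_left₀ hW1nn habs_w 2
      have h2 : (2 * ∑ j, |u j|)^2 = 4 * (∑ j, |u j|)^2 := by ring
      linarith
    have hT1sq : (∑ j, |u j|)^2 ≤ ((S.card : ℝ) - 1)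
        * ∑ t : {j : Fin (p-1) // Fin.castLE (Nat.sub_le p 1) j ∈ S}, (x t)^2 := by
      rw [habs_u]
      calc (∑ t : {j : Fin (p-1) // Fin.castLE (Nat.sub_le p 1) j ∈ S}, |x t|)^2
          ≤ (Fintype.card {j : Fin (p-1) // Fin.castLE (Nat.sub_le p 1) j ∈ S} : ℝ)
            * ∑ t : {j : Fin (p-1) // Fin.castLE (Nat.sub_le p 1) j ∈ S}, |x t|^2 := hCS
        _ = (Fintype.card {j : Fin (p-1) // Fin.castLE (Nat.sub_le p 1) j ∈ S} : ℝ)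
            * ∑ t : {j : Fin (p-1) // Fin.castLE (Nat.sub_le p 1) j ∈ S}, (x t)^2 := by
              rw [hsq_abs]
        _ ≤ ((S.card : ℝ) - 1)
            * ∑ t : {j : Fin (p-1) // Fin.castLE (Nat.sub_le p 1) j ∈ S}, (x t)^2 :=
              mul_le_mul_of_nonneg_right hcardR hx2.le
    have hErrLB : -(δ * (∑ i, |w i|)^2) ≤ w ⬝ᵥ (Sigt - Sig) *ᵥ w := neg_le_of_abs_le herr
    have hcard1 : (0:ℝ) ≤ (S.card : ℝ) - 1 := by
      have h2 : 1 ≤ S.card := Finset.card_pos.mpr ⟨_, hpS⟩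
      have h2' : (1:ℝ) ≤ (S.card : ℝ) := by exact_mod_cast h2
      linarith
    set Sx := ∑ t : {j : Fin (p-1) // Fin.castLE (Nat.sub_le p 1) j ∈ S}, (x t)^2 with hSx
    set Sv := ∑ t : ↥S, (v t)^2 with hSv
    have e1 : Cmin * Sx ≤ Cmin * Sv := mul_le_mul_of_nonneg_left hxle hCmin.le
    have e3 : δ * (∑ i, |w i|)^2 ≤ δ * (4 * (∑ j, |u j|)^2) :=
      mul_le_mul_of_nonneg_left hWsq hδ0
    have e4 : δ * (4 * (∑ j, |u j|)^2) ≤ δ * (4 * (((S.card : ℝ) - 1) * Sx)) :=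
      mul_le_mul_of_nonneg_left (by linarith) hδ0
    have hprodnn : 0 ≤ ((S.card : ℝ) - 1) * δ := mul_nonneg hcard1 hδ0
    have hcoef : 0 < Cmin - 4 * (((S.card : ℝ) - 1) * δ) := by nlinarith
    have hfin : 0 < (Cmin - 4 * (((S.card : ℝ) - 1) * δ)) * Sx := mul_pos hcoef hx2
    have hexp : (Cmin - 4 * (((S.card : ℝ) - 1) * δ)) * Sx
        = Cmin * Sx - δ * (4 * (((S.card : ℝ) - 1) * Sx)) := by ring
    linarith

/-- Positive definiteness of `Σ̃^p_SS` with high probability: under the eigenvalue condition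
`Λ_min(Σ_SS) ≥ C_min > 0` and the entrywise closeness (concentration) condition on `Σ̂`, for
every `ε ≤ min(ε₀, C_min/16)` the `(S−p) × (S−p)` submatrix of `Σ̃^p = (D^p)ᵀ Σ̃ D^p` is
positive definite with probability at least
`1 − C p² exp(−c n (s−1)⁻² ε² ζ⁻¹ / 64)`. -/
theorem logratio_submatrix_posDef_whp
    {Ω : Type*} [MeasurableSpace Ω] (μ : Measure Ω) [IsProbabilityMeasure μ]
    (n p : ℕ) (hp : 2 ≤ p)
    (Sig : Matrix (Fin p) (Fin p) ℝ) (hSig : Sig.PosSemidef)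
    (S : Finset (Fin p)) (hpS : (⟨p - 1, by omega⟩ : Fin p) ∈ S) (hs : 2 ≤ S.card)
    (Cmin : ℝ) (hCmin : 0 < Cmin)
    (hmin : Cmin ≤ lamMin (Sig.submatrix (fun i : S => (i : Fin p)) (fun j : S => (j : Fin p))))
    (Sighat Sigtil : Ω → Matrix (Fin p) (Fin p) ℝ)
    (hAS : ∀ᵐ ω ∂μ, (Sigtil ω).PosSemidef ∧
      ∀ K : Matrix (Fin p) (Fin p) ℝ, K.PosSemidef →
        maxNorm (Sigtil ω - Sighat ω) ≤ maxNorm (K - Sighat ω))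
    (C c ζ ε₀ : ℝ) (hC : 0 < C) (hc : 0 < c) (hζ : 0 < ζ) (hε₀ : 0 < ε₀)
    (hclose : ∀ ε' : ℝ, 0 < ε' → ε' ≤ ε₀ → ∀ i j : Fin p,
      μ {ω | ε' ≤ |Sighat ω i j - Sig i j|}
        ≤ ENNReal.ofReal (C * Real.exp (-(c * n * ε' ^ 2) / ζ))) :
    ∀ ε : ℝ, 0 < ε → ε ≤ min ε₀ (Cmin / 16) →
      ENNReal.ofReal
          (1 - C * p ^ 2 *
            Real.exp (-(c * n * ε ^ 2) / (64 * ((S.card : ℝ) - 1) ^ 2 * ζ)))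
        ≤ μ {ω |
            (((Dmat p)ᵀ * Sigtil ω * Dmat p).submatrix
              (fun j : {j : Fin (p - 1) // Fin.castLE (Nat.sub_le p 1) j ∈ S} => j.1)
              (fun j : {j : Fin (p - 1) // Fin.castLE (Nat.sub_le p 1) j ∈ S} => j.1)).PosDef} := by
  intro ε hε hεle
  classical
  haveI : Nonempty (Fin p) := ⟨⟨0, by omega⟩⟩
  set s1 : ℝ := (S.card : ℝ) - 1 with hs1
  have hs1_ge : (1:ℝ) ≤ s1 := by
    have : (2:ℝ) ≤ (S.card : ℝ) := by exact_mod_cast hs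
    simp only [hs1]; linarith
  have hs1pos : 0 < s1 := by linarith
  set ε' : ℝ := ε / (8 * s1) with hε'
  have hε'pos : 0 < ε' := div_pos hε (by linarith)
  have hε'le_ε : ε' ≤ ε := div_le_self hε.le (by linarith)
  have hεε₀ : ε ≤ ε₀ := hεle.trans (min_le_left _ _)
  have hεC : ε ≤ Cmin / 16 := hεle.trans (min_le_right _ _)
  have hε'ε₀ : ε' ≤ ε₀ := hε'le_ε.trans hεε₀
  -- the exponential bound with ε' equals the stated one
  have hs1ne : s1 ≠ 0 := ne_of_gt hs1pos
  have hζne : ζ ≠ 0 := ne_of_gt hζ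
  have harg : -(c * n * ε' ^ 2) / ζ = -(c * n * ε ^ 2) / (64 * s1 ^ 2 * ζ) := by
    rw [hε']
    rw [div_pow, mul_pow, div_eq_div_iff (by positivity) (by positivity)]
    have h : s1 ^ 2 * (s1 ^ 2)⁻¹ = 1 := mul_inv_cancel₀ (pow_ne_zero 2 hs1ne)
    field_simp
    ring
  have hexp_eq : C * Real.exp (-(c * n * ε' ^ 2) / ζ)
      = C * Real.exp (-(c * n * ε ^ 2) / (64 * s1 ^ 2 * ζ)) := by
    rw [harg]
  set r : ℝ := C * (p:ℝ) ^ 2 * Real.exp (-(c * n * ε ^ 2) / (64 * s1 ^ 2 * ζ)) with hr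
  have hr0 : 0 ≤ r := by
    have := Real.exp_pos (-(c * n * ε ^ 2) / (64 * s1 ^ 2 * ζ))
    positivity
  -- bad event
  set B : Set Ω := ⋃ i : Fin p, ⋃ j : Fin p, {ω | ε' ≤ |Sighat ω i j - Sig i j|} with hB
  have hμB : μ B ≤ ENNReal.ofReal r := by
    have h1 : μ B ≤ ∑ i : Fin p, ∑ j : Fin p, μ {ω | ε' ≤ |Sighat ω i j - Sig i j|} := by
      refine (measure_iUnion_le _).trans ?_
      rw [tsum_fintype]
      refine Finset.sum_le_sum fun i _ => ?_
      refine (measure_iUnion_le _).trans ?_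
      rw [tsum_fintype]
    have h2 : ∑ i : Fin p, ∑ j : Fin p, μ {ω | ε' ≤ |Sighat ω i j - Sig i j|}
        ≤ ∑ _i : Fin p, ∑ _j : Fin p,
            ENNReal.ofReal (C * Real.exp (-(c * n * ε' ^ 2) / ζ)) :=
      Finset.sum_le_sum fun i _ => Finset.sum_le_sum fun j _ => hclose ε' hε'pos hε'ε₀ i j
    have h3 : ∑ _i : Fin p, ∑ _j : Fin p,
        ENNReal.ofReal (C * Real.exp (-(c * n * ε' ^ 2) / ζ)) = ENNReal.ofReal r := by
      rw [Finset.sum_const, Finset.sum_const, Finset.card_univ, Fintype.card_fin]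
      rw [hexp_eq, hr]
      rw [smul_smul, nsmul_eq_mul]
      rw [← ENNReal.ofReal_natCast (p * p)]
      rw [← ENNReal.ofReal_mul (by positivity)]
      · congr 1
        push_cast
        ring
    calc μ B ≤ _ := h1
      _ ≤ _ := h2
      _ = _ := h3
  -- good event inclusion
  set T : Set Ω := {ω |
      (((Dmat p)ᵀ * Sigtil ω * Dmat p).submatrix
        (fun j : {j : Fin (p - 1) // Fin.castLE (Nat.sub_le p 1) j ∈ S} => j.1)
        (fun j : {j : Fin (p - 1) // Fin.castLE (Nat.sub_le p 1) j ∈ S} => j.1)).PosDef} with hT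
  set A : Set Ω := {ω | (Sigtil ω).PosSemidef ∧
      ∀ K : Matrix (Fin p) (Fin p) ℝ, K.PosSemidef →
        maxNorm (Sigtil ω - Sighat ω) ≤ maxNorm (K - Sighat ω)} with hA
  have hAc : μ Aᶜ = 0 := by
    rw [hA]
    exact hAS
  have hincl : Bᶜ ∩ A ⊆ T := by
    rintro ω ⟨hωB, hωA⟩
    have hent : ∀ i j : Fin p, |Sighat ω i j - Sig i j| < ε' := by
      intro i j
      by_contra hcon
      push_neg at hcon
      exact hωB (Set.mem_iUnion.mpr ⟨i, Set.mem_iUnion.mpr ⟨j, hcon⟩⟩)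
    have h1 : maxNorm (Sig - Sighat ω) ≤ ε' := by
      refine maxNorm_le _ _ fun i j => ?_
      have := (hent i j).le
      rw [abs_sub_comm] at this
      simpa [Matrix.sub_apply] using this
    have h2 : maxNorm (Sigtil ω - Sighat ω) ≤ ε' := (hωA.2 Sig hSig).trans h1
    have hd : ∀ i j : Fin p, |Sigtil ω i j - Sig i j| ≤ 2 * ε' := by
      intro i j
      have ha : |Sigtil ω i j - Sighat ω i j| ≤ ε' := by
        have := entry_le_maxNorm (Sigtil ω - Sighat ω) i j
        simp only [Matrix.sub_apply] at this
        exact this.trans h2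
      have hb : |Sighat ω i j - Sig i j| ≤ ε' := (hent i j).le
      calc |Sigtil ω i j - Sig i j|
          = |(Sigtil ω i j - Sighat ω i j) + (Sighat ω i j - Sig i j)| := by ring_nf
        _ ≤ |Sigtil ω i j - Sighat ω i j| + |Sighat ω i j - Sig i j| := abs_add_le _ _
        _ ≤ 2 * ε' := by linarith
    have hsmall : 8 * s1 * (2 * ε') < Cmin := by
      have h16 : 8 * s1 * (2 * ε') = 2 * ε := by
        rw [hε']
        field_simp
      rw [h16]
      linarith
    exact det_core p hp Sig (Sigtil ω) hSig hωA.1.1 S hpS Cmin hCmin hmin (2 * ε')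
      (by positivity) hd (by rw [hs1] at hsmall; exact hsmall)
  -- measure chase
  have hTB : μ Bᶜ ≤ μ T := by
    calc μ Bᶜ ≤ μ (Bᶜ ∩ A) + μ (Bᶜ \ A) := measure_le_inter_add_diff μ _ _
      _ ≤ μ T + μ Aᶜ := by
          refine add_le_add (measure_mono hincl) (measure_mono ?_)
          intro ω hω
          exact hω.2
      _ = μ T := by rw [hAc, add_zero]
  have h1le : (1:ℝ≥0∞) ≤ μ B + μ T := by
    have hu : (1:ℝ≥0∞) = μ (Set.univ) := (measure_univ).symm
    rw [hu, ← Set.union_compl_self B]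
    exact (measure_union_le _ _).trans (add_le_add le_rfl hTB)
  rcases le_or_gt 1 r with hr1 | hr1
  · have : ENNReal.ofReal (1 - r) = 0 := by
      rw [ENNReal.ofReal_eq_zero]
      linarith
    rw [hr] at this
    rw [this]
    exact zero_le
  · have hofr : ENNReal.ofReal (1 - r) + ENNReal.ofReal r = 1 := by
      rw [← ENNReal.ofReal_add (by linarith) hr0]
      norm_num
    have hkey : ENNReal.ofReal (1 - r) + ENNReal.ofReal r ≤ μ T + ENNReal.ofReal r := by
      rw [hofr]
      calc (1:ℝ≥0∞) ≤ μ B + μ T := h1le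
        _ ≤ ENNReal.ofReal r + μ T := add_le_add hμB le_rfl
        _ = μ T + ENNReal.ofReal r := by rw [add_comm]
    have := (ENNReal.add_le_add_iff_right (ENNReal.ofReal_ne_top)).mp hkey
    rw [hr] at this
    exact this
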